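/- Let f : ℕ → ℕ → ℕ be defined by f(0,h) = 0 for all h, f(n,0) = 1 for all n ≥ 1, and f(n,h) = f(n,h-1) + f(⌊n/2⌋,h) + f(n-1-⌊n/2⌋,h) for all n,h ≥ 1. Then for every real ε with 0 < ε < 1.45 - log₂ e, there exists a real constant c > 0 such that for all natural numbers n ≥ 2 and h ≥ 1 with h ≥ c · log₂ n, it holds (viewing values as reals) that f(n,h) ≤ n^(2.45 - ε + log₂(h / log₂ n)), where log₂ is the real base-2 logarithm and the power is a real power. -/

import Mathlib

theorem key (f : ℕ → ℕ → ℕ)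
    (hf0 : ∀ h, f 0 h = 0)
    (hfn0 : ∀ n, 1 ≤ n → f n 0 = 1)
    (hrec : ∀ n h, 1 ≤ n → 1 ≤ h →
      f n h = f n (h - 1) + f (n / 2) h + f (n - 1 - n / 2) h) :
    ∀ n h, f n h ≤ n * (h + Nat.log 2 n).choose (Nat.log 2 n) := by
  have hmono : ∀ m j j' : ℕ, j ≤ j' → (m + j).choose j ≤ (m + j').choose j' := by
    intro m j j' h
    rw [Nat.add_comm m j, Nat.choose_symm_add, Nat.add_comm m j', Nat.choose_symm_add]
    exact Nat.choose_le_choose m (by omega)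
  have hf1 : ∀ h, f 1 h = 1 := by
    intro h
    induction h with
    | zero => exact hfn0 1 le_rfl
    | succ h ih => simpa [hf0, ih] using hrec 1 (h+1) le_rfl (by omega)
  intro n
  induction n using Nat.strong_induction_on with
  | _ n IH =>
  intro h
  match n, IH with
  | 0, _ => simp [hf0]
  | 1, _ => simp [hf1]
  | (m+2), IH =>
    set n := m + 2 with hn
    have hn2 : 2 ≤ n := by omega
    have hd1 : 1 ≤ Nat.log 2 n := Nat.log_pos (by omega) (by omega)
    set d := Nat.log 2 n with hd
    -- children
    have ha : n / 2 < n := by omega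
    have hb : n - 1 - n / 2 < n := by omega
    have hda : Nat.log 2 (n / 2) = d - 1 := by rw [hd, Nat.log_div_base]
    have hdb : Nat.log 2 (n - 1 - n / 2) ≤ d - 1 := by
      calc Nat.log 2 (n - 1 - n / 2) ≤ Nat.log 2 (n / 2) := Nat.log_mono_right (by omega)
        _ = d - 1 := hda
    induction h with
    | zero =>
      rw [hfn0 n (by omega)]
      have : 1 ≤ (0 + d).choose d := by simp
      calc 1 ≤ n * 1 := by omega
        _ ≤ n * (0 + d).choose d := by exact Nat.mul_le_mul_left n this
    | succ h ih =>
      have hrw := hrec n (h+1) (by omega) (by omega)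
      simp only [Nat.add_sub_cancel] at hrw
      have bnda : f (n/2) (h+1) ≤ (n/2) * ((h+1) + (d-1)).choose (d-1) := by
        have := IH (n/2) ha (h+1)
        rw [hda] at this; exact this
      have bndb : f (n-1-n/2) (h+1) ≤ (n-1-n/2) * ((h+1) + (d-1)).choose (d-1) := by
        have := IH (n-1-n/2) hb (h+1)
        calc f (n-1-n/2) (h+1) ≤ (n-1-n/2) * ((h+1) + Nat.log 2 (n-1-n/2)).choose (Nat.log 2 (n-1-n/2)) := this
          _ ≤ (n-1-n/2) * ((h+1) + (d-1)).choose (d-1) :=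
            Nat.mul_le_mul_left _ (hmono (h+1) _ _ hdb)
      have pascal0 : ∀ H e : ℕ, (H + (e+1)).choose (e+1) + ((H+1) + e).choose e
          = ((H+1)+(e+1)).choose (e+1) := by
        intro H e
        have h1 : (H+1) + (e+1) = (H + (e+1)) + 1 := by omega
        have h2 : (H+1) + e = H + (e+1) := by omega
        rw [h1, h2, Nat.choose_succ_succ]
        simp only [Nat.succ_eq_add_one]
        omega
      have pascal : (h + d).choose d + ((h+1) + (d-1)).choose (d-1) = ((h+1) + d).choose d := by
        have hd' : d - 1 + 1 = d := by omega
        have := pascal0 h (d-1)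
        rw [hd'] at this
        exact this
      calc f n (h+1) = f n h + f (n/2) (h+1) + f (n-1-n/2) (h+1) := hrw
        _ ≤ n * (h + d).choose d + (n/2) * ((h+1) + (d-1)).choose (d-1)
            + (n-1-n/2) * ((h+1) + (d-1)).choose (d-1) := by
          exact Nat.add_le_add (Nat.add_le_add ih bnda) bndb
        _ = n * (h + d).choose d + ((n/2) + (n-1-n/2)) * ((h+1) + (d-1)).choose (d-1) := by
          ring
        _ ≤ n * (h + d).choose d + n * ((h+1) + (d-1)).choose (d-1) := by
          have hsum : (n/2) + (n-1-n/2) ≤ n := by omega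
          gcongr
        _ = n * ((h + d).choose d + ((h+1) + (d-1)).choose (d-1)) := by ring
        _ = n * ((h+1) + d).choose d := by rw [pascal]

lemma choose_bound (h d : ℕ) (hd : 1 ≤ d) :
    ((h+d).choose d : ℝ) ≤ Real.exp d * (((h:ℝ)+d)/d)^d := by
  have hd0 : (0:ℝ) < d := by exact_mod_cast hd
  have h1 : ((h+d).choose d : ℝ) ≤ ((h:ℝ)+(d:ℝ))^d / (Nat.factorial d : ℝ) := by
    have := Nat.choose_le_pow_div (α := ℝ) d (h+d)
    push_cast at this ⊢
    convert this using 3 <;> push_cast <;> ring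
  have h2 : ((d:ℝ))^d / (Nat.factorial d : ℝ) ≤ Real.exp d := by
    have hs := Real.sum_le_exp_of_nonneg (x := (d:ℝ)) (by positivity) (d+1)
    have hm : ((d:ℝ))^d / (Nat.factorial d : ℝ) ≤ ∑ i ∈ Finset.range (d+1), (d:ℝ)^i / (Nat.factorial i : ℝ) :=
      Finset.single_le_sum (f := fun i => (d:ℝ)^i / (Nat.factorial i : ℝ))
        (fun i _ => by positivity) (Finset.self_mem_range_succ d)
    linarith
  have hfac : (0:ℝ) < (Nat.factorial d : ℝ) := by exact_mod_cast d.factorial_pos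
  calc ((h+d).choose d : ℝ) ≤ ((h:ℝ)+(d:ℝ))^d / (Nat.factorial d : ℝ) := h1
    _ = (((h:ℝ)+d)/d)^d * (((d:ℝ))^d / (Nat.factorial d : ℝ)) := by
        rw [div_pow]; field_simp
    _ ≤ (((h:ℝ)+d)/d)^d * Real.exp d := by
        apply mul_le_mul_of_nonneg_left h2 (by positivity)
    _ = Real.exp d * (((h:ℝ)+d)/d)^d := by ring

theorem stmt_9 (f : ℕ → ℕ → ℕ)
    (hf0 : ∀ h, f 0 h = 0)
    (hfn0 : ∀ n, 1 ≤ n → f n 0 = 1)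
    (hrec : ∀ n h, 1 ≤ n → 1 ≤ h →
      f n h = f n (h - 1) + f (n / 2) h + f (n - 1 - n / 2) h) :
    ∀ ε : ℝ, 0 < ε → ε < 1.45 - Real.logb 2 (Real.exp 1) →
      ∃ c : ℝ, 0 < c ∧ ∀ n h : ℕ, 2 ≤ n → 1 ≤ h → c * Real.logb 2 n ≤ h →
        (f n h : ℝ) ≤ (n : ℝ) ^ ((2.45 : ℝ) - ε + Real.logb 2 ((h : ℝ) / Real.logb 2 n)) := by
  intro ε hε hε'
  have hlog2 : (0:ℝ) < Real.log 2 := Real.log_pos one_lt_two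
  have hεlog : (1:ℝ) < (1.45 - ε) * Real.log 2 := by
    have h1 : Real.logb 2 (Real.exp 1) = 1 / Real.log 2 := by
      rw [Real.logb, Real.log_exp]
    rw [h1] at hε'
    have h2 : 1 / Real.log 2 < 1.45 - ε := by linarith
    calc (1:ℝ) = (1/Real.log 2) * Real.log 2 := by field_simp
      _ < (1.45 - ε) * Real.log 2 := by
        exact mul_lt_mul_of_pos_right h2 hlog2
  set δ := (1.45 - ε) * Real.log 2 - 1 with hδdef
  have hδ : 0 < δ := by simp only [hδdef]; linarith
  refine ⟨Real.exp 1 + 2/δ, by positivity, ?_⟩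
  set c := Real.exp 1 + 2/δ with hcdef
  have hc0 : 0 < c := by positivity
  have hce : Real.exp 1 ≤ c := le_add_of_nonneg_right (by positivity)
  have hcδ : 1/c ≤ δ := by
    have h2δ : 2/δ ≤ c := le_add_of_nonneg_left (by positivity)
    have : 1/c ≤ 1/(2/δ) := by
      apply one_div_le_one_div_of_le (by positivity) h2δ
    calc 1/c ≤ 1/(2/δ) := this
      _ = δ/2 := by field_simp
      _ ≤ δ := by linarith
  intro n h hn hh hch
  set L := Real.logb 2 (n:ℝ) with hLdef
  have hL1 : (1:ℝ) ≤ L := by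
    rw [hLdef]
    calc (1:ℝ) = Real.logb 2 2 := (Real.logb_self_eq_one (b := 2) (by norm_num)).symm
      _ ≤ Real.logb 2 n := Real.logb_le_logb_of_le (by norm_num) (by norm_num)
          (by exact_mod_cast hn)
  have hLpos : (0:ℝ) < L := lt_of_lt_of_le one_pos hL1
  have hnpos : (0:ℝ) < (n:ℝ) := by exact_mod_cast (by omega : 0 < n)
  set d := Nat.log 2 n with hddef
  have hd1 : 1 ≤ d := Nat.log_pos (by omega) (by omega)
  have hd0 : (0:ℝ) < (d:ℝ) := by exact_mod_cast hd1
  have hdL : (d:ℝ) ≤ L := by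
    have h2d : ((2:ℕ)^d : ℕ) ≤ n := Nat.pow_log_le_self 2 (by omega)
    have h2d' : ((2:ℝ)^d) ≤ (n:ℝ) := by exact_mod_cast h2d
    have := Real.logb_le_logb_of_le (show (1:ℝ) < 2 by norm_num) (by positivity) h2d'
    rw [Real.logb_pow, Real.logb_self_eq_one (b := 2) (by norm_num), mul_one] at this
    exact this
  have hhpos : (0:ℝ) < (h:ℝ) := by exact_mod_cast hh
  have hcL : c ≤ (h:ℝ)/L := (le_div_iff₀ hLpos).mpr hch
  have hB1 : (1:ℝ) ≤ Real.log ((h:ℝ)/L) := by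
    have h1 : Real.exp 1 ≤ (h:ℝ)/L := le_trans hce hcL
    calc (1:ℝ) = Real.log (Real.exp 1) := (Real.log_exp 1).symm
      _ ≤ Real.log ((h:ℝ)/L) := (Real.log_le_log_iff (Real.exp_pos 1)
          (lt_of_lt_of_le (Real.exp_pos 1) h1)).mpr h1
  -- abbreviations
  set B := Real.log ((h:ℝ)/L) with hBdef
  set t := (((h:ℝ)+d)/d) with htdef
  have ht0 : (0:ℝ) < t := by rw [htdef]; positivity
  -- core inequality in log form
  have hlogn : Real.log (n:ℝ) = L * Real.log 2 := by
    rw [hLdef, Real.logb]; field_simp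
  have hkey : (f n h : ℝ) ≤ (n:ℝ) * (((h + d).choose d : ℕ) : ℝ) := by
    exact_mod_cast key f hf0 hfn0 hrec n h
  have hcb : (((h+d).choose d : ℕ) : ℝ) ≤ Real.exp d * t^d := by
    rw [htdef]; exact choose_bound h d hd1
  clear_value δ c L B t d
  have main : Real.log (n:ℝ) + ((d:ℝ) + d * Real.log t)
      ≤ Real.log (n:ℝ) * ((2.45:ℝ) - ε + Real.logb 2 ((h:ℝ)/L)) := by
    have hsplit : Real.log t = Real.log (((h:ℝ)+d)/h) + B + Real.log (L/(d:ℝ)) := by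
      rw [htdef, hBdef, ← Real.log_mul (by positivity) (by positivity),
        ← Real.log_mul (by positivity) (by positivity)]
      congr 1
      field_simp
      try ring
    have hA : Real.log (((h:ℝ)+d)/h) ≤ 1/c := by
      have h1 := Real.log_le_sub_one_of_pos (show (0:ℝ) < ((h:ℝ)+d)/h by positivity)
      have h2 : ((h:ℝ)+d)/h - 1 = (d:ℝ)/h := by field_simp; ring
      have h3 : (d:ℝ)/h ≤ L/(c*L) :=
        div_le_div₀ (le_of_lt hLpos) hdL (by positivity) hch
      have h4 : L/(c*L) = 1/c := by
        field_simp
        try ring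
      linarith [h1, h2, h3, h4]
    have hC : Real.log (L/(d:ℝ)) ≤ (L - d)/d := by
      have h1 := Real.log_le_sub_one_of_pos (show (0:ℝ) < L/(d:ℝ) by positivity)
      have h2 : L/(d:ℝ) - 1 = (L - d)/d := by field_simp
      linarith
    set x := L - (d:ℝ) with hxdef
    have hx0 : (0:ℝ) ≤ x := by rw [hxdef]; linarith
    clear_value x
    -- d * log t ≤ L/c + L*B - x + x
    have hdlog : (d:ℝ) * Real.log t ≤ L/c + (L*B - x*B) + x := by
      rw [hsplit]
      have t1 : (d:ℝ) * Real.log (((h:ℝ)+d)/h) ≤ L/c := by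
        calc (d:ℝ) * Real.log (((h:ℝ)+d)/h) ≤ (d:ℝ) * (1/c) := by
              apply mul_le_mul_of_nonneg_left hA (le_of_lt hd0)
          _ ≤ L * (1/c) := by
              apply mul_le_mul_of_nonneg_right hdL (by positivity)
          _ = L/c := by ring
      have t2 : (d:ℝ) * B = L*B - x*B := by rw [hxdef]; ring
      have t3 : (d:ℝ) * Real.log (L/(d:ℝ)) ≤ x := by
        calc (d:ℝ) * Real.log (L/(d:ℝ)) ≤ (d:ℝ) * (x/(d:ℝ)) := by
              apply mul_le_mul_of_nonneg_left hC (le_of_lt hd0)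
          _ = x := by field_simp
      linarith [t1, t2, t3]
    have hxB : x ≤ x * B := le_mul_of_one_le_right hx0 hB1
    have hlogb : Real.logb 2 ((h:ℝ)/L) = B / Real.log 2 := by
      rw [hBdef, Real.logb]
    rw [hlogb, hlogn]
    have hexp : L * Real.log 2 * ((2.45:ℝ) - ε + B / Real.log 2)
        = (2.45 - ε) * Real.log 2 * L + L * B := by
      field_simp
    rw [hexp]
    -- LHS ≤ L*log2 + L + L/c + L*B ≤ (1 + 1 + δ)... need:
    -- L*log2 + d + d*log t ≤ (2.45-ε)*log2*L + L*B
    -- (2.45-ε)*log2 = log2 + 1 + δ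
    have hδeq : (2.45 - ε) * Real.log 2 = Real.log 2 + 1 + δ := by
      rw [hδdef]; ring
    rw [hδeq]
    have hcδL : L/c ≤ δ * L := by
      calc L/c = L * (1/c) := by ring
        _ ≤ L * δ := mul_le_mul_of_nonneg_left hcδ (le_of_lt hLpos)
        _ = δ * L := by ring
    calc L * Real.log 2 + ((d:ℝ) + (d:ℝ) * Real.log t)
        ≤ L * Real.log 2 + (L + (L/c + (L*B - x*B) + x)) := by linarith [hdlog, hdL]
      _ ≤ L * Real.log 2 + (L + (δ*L + L*B)) := by linarith [hcδL, hxB]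
      _ = (Real.log 2 + 1 + δ) * L + L * B := by ring
  -- assemble
  have heq1 : (n:ℝ) * (Real.exp d * t^d)
      = Real.exp (Real.log (n:ℝ) + ((d:ℝ) + d * Real.log t)) := by
    rw [Real.exp_add, Real.exp_add, Real.exp_log hnpos, Real.exp_nat_mul, Real.exp_log ht0]
  have heq2 : (n:ℝ) ^ ((2.45:ℝ) - ε + Real.logb 2 ((h:ℝ)/L))
      = Real.exp (Real.log (n:ℝ) * ((2.45:ℝ) - ε + Real.logb 2 ((h:ℝ)/L))) :=
    Real.rpow_def_of_pos hnpos _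
  calc (f n h : ℝ) ≤ (n:ℝ) * (((h + d).choose d : ℕ) : ℝ) := hkey
    _ ≤ (n:ℝ) * (Real.exp d * t^d) := by
        apply mul_le_mul_of_nonneg_left hcb (le_of_lt hnpos)
    _ = Real.exp (Real.log (n:ℝ) + ((d:ℝ) + d * Real.log t)) := heq1
    _ ≤ Real.exp (Real.log (n:ℝ) * ((2.45:ℝ) - ε + Real.logb 2 ((h:ℝ)/L))) :=
        Real.exp_le_exp.mpr main
    _ = (n:ℝ) ^ ((2.45:ℝ) - ε + Real.logb 2 ((h:ℝ)/L)) := heq2.symm
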